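/- For the piecewise map f of the example, the distortion Δ(f,n,(0,0),(h,h)) = 2^n, Δ(f,n,(0,0),(0,h)) = 2^{−n}, and Δ(f,n,(0,0),(h,0)) = 3^n for all h ≠ 0 and n ∈ ℕ, where Δ(f,n,x,y) := ‖f^n(x)−f^n(y)‖/‖x−y‖. -/

import Mathlib

open Filter Set MeasureTheory

noncomputable section

/-- Points of the plane. -/
abbrev Pt := ℝ × ℝ

/-- The dynamical ball `B_x(δ, n)`. -/
def dynBall (f : Pt → Pt) (x : Pt) (δ : ℝ) (n : ℕ) : Set Pt :=
  {y | ∀ j ≤ n, ‖f^[j] x - f^[j] y‖ < δ}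

/-- The line `L_{x,v} = {x + k v : k ∈ ℝ}`. -/
def dynLine (x v : Pt) : Set Pt := {p | ∃ k : ℝ, p = x + k • v}

/-- The distortion `Δ(f,n,x,y) = ‖f^n x - f^n y‖ / ‖x - y‖`. -/
def dynDelta (f : Pt → Pt) (n : ℕ) (x y : Pt) : ℝ := ‖f^[n] x - f^[n] y‖ / ‖x - y‖

/-- `sup_{y ∈ B_x(δ,n)\{x}} Δ(f,n,x,y)`. -/
def dynSup (f : Pt → Pt) (n : ℕ) (x : Pt) (δ : ℝ) : ℝ :=
  sSup (dynDelta f n x '' (dynBall f x δ n \ {x}))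

/-- `sup_{y ∈ (B_x(δ,n)\{x}) ∩ L_{x,v}} Δ(f,n,x,y)`. -/
def dynSupDir (f : Pt → Pt) (n : ℕ) (x v : Pt) (δ : ℝ) : ℝ :=
  sSup (dynDelta f n x '' ((dynBall f x δ n \ {x}) ∩ dynLine x v))

/-- The top new Lyapunov exponent
`χ_N^+(f,x) = limsup_n lim_{δ→0} (1/n) log sup_{y ∈ B_x(δ,n)\{x}} Δ(f,n,x,y)`;
the limit as `δ → 0⁺` is realized as the infimum over `δ > 0` (valid by monotonicity). -/
def newLyap (f : Pt → Pt) (x : Pt) : ℝ :=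
  limsup (fun n : ℕ =>
    sInf ((fun δ => (n : ℝ)⁻¹ * Real.log (dynSup f n x δ)) '' Ioi (0 : ℝ))) atTop

/-- The directional new Lyapunov exponent `χ_N^+(f,x,v)`. -/
def newLyapDir (f : Pt → Pt) (x v : Pt) : ℝ :=
  limsup (fun n : ℕ =>
    sInf ((fun δ => (n : ℝ)⁻¹ * Real.log (dynSupDir f n x v δ)) '' Ioi (0 : ℝ))) atTop

/-- `g_n^δ(x) = sup_{y ∈ B_x(δ,n)\{x}} log Δ(f,n,x,y)`. -/
def gLog (f : Pt → Pt) (δ : ℝ) (n : ℕ) (x : Pt) : ℝ :=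
  sSup ((fun y => Real.log (dynDelta f n x y)) '' (dynBall f x δ n \ {x}))

open Classical in
/-- The piecewise map of the example: `f(x,y) = (2x, (3/2)x + (1/2)y)` if `x(y−x) > 0`;
`(3x−y, 2y)` if `x(y−x) < 0`; `(3x, y/2)` if `xy ≤ 0` and `x ≠ y`; `(2x, 2y)` if `x = y`. -/
def examplePiecewise (p : Pt) : Pt :=
  if p.1 = p.2 then (2 * p.1, 2 * p.2)
  else if p.1 * (p.2 - p.1) > 0 then (2 * p.1, 3 / 2 * p.1 + 1 / 2 * p.2)
  else if p.1 * (p.2 - p.1) < 0 then (3 * p.1 - p.2, 2 * p.2)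
  else (3 * p.1, p.2 / 2)

lemma ep_diag (h : ℝ) : examplePiecewise (h, h) = (2 * h, 2 * h) := by
  simp [examplePiecewise]

lemma ep_vert (h : ℝ) : examplePiecewise (0, h) = (0, h / 2) := by
  rcases eq_or_ne h 0 with rfl | hne
  · norm_num [examplePiecewise]
  · simp [examplePiecewise, hne.symm]

lemma ep_hor (h : ℝ) : examplePiecewise (h, 0) = (3 * h, 0) := by
  rcases eq_or_ne h 0 with rfl | hne
  · norm_num [examplePiecewise]
  · have h1 : h * (0 - h) < 0 := by
      have := mul_self_pos.mpr hne
      nlinarith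
    rw [examplePiecewise]
    rw [if_neg (show ¬ (h, (0:ℝ)).1 = (h, (0:ℝ)).2 from hne), if_neg (not_lt.mpr h1.le),
      if_pos h1]
    norm_num

lemma iter_diag (n : ℕ) : ∀ h : ℝ, examplePiecewise^[n] (h, h) = (2 ^ n * h, 2 ^ n * h) := by
  induction n with
  | zero => intro h; simp
  | succ n ih =>
      intro h
      rw [Function.iterate_succ_apply, ep_diag, ih (2 * h)]
      exact Prod.ext (by ring) (by ring)

lemma iter_vert (n : ℕ) : ∀ h : ℝ, examplePiecewise^[n] (0, h) = (0, h / 2 ^ n) := by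
  induction n with
  | zero => intro h; simp
  | succ n ih =>
      intro h
      rw [Function.iterate_succ_apply, ep_vert, ih (h / 2)]
      exact Prod.ext rfl (by push_cast; ring)

lemma iter_hor (n : ℕ) : ∀ h : ℝ, examplePiecewise^[n] (h, 0) = (3 ^ n * h, 0) := by
  induction n with
  | zero => intro h; simp
  | succ n ih =>
      intro h
      rw [Function.iterate_succ_apply, ep_hor, ih (3 * h)]
      exact Prod.ext (by push_cast; ring) rfl

/-- distortion values for the piecewise example map:
`Δ(f,n,(0,0),(h,h)) = 2^n`, `Δ(f,n,(0,0),(0,h)) = 2^{−n}` and `Δ(f,n,(0,0),(h,0)) = 3^n`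
for all `h ≠ 0` and `n ∈ ℕ`. -/
theorem examplePiecewise_delta (n : ℕ) (h : ℝ) (hh : h ≠ 0) :
    dynDelta examplePiecewise n (0, 0) (h, h) = 2 ^ n ∧
    dynDelta examplePiecewise n (0, 0) (0, h) = (2 ^ n : ℝ)⁻¹ ∧
    dynDelta examplePiecewise n (0, 0) (h, 0) = 3 ^ n := by
  have h0 : examplePiecewise^[n] (0, 0) = (0, 0) := by
    simpa using iter_diag n 0
  have habs : |h| ≠ 0 := abs_ne_zero.mpr hh
  have h2 : (0:ℝ) < 2 ^ n := by positivity
  have h3 : (0:ℝ) < 3 ^ n := by positivity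
  refine ⟨?_, ?_, ?_⟩
  · rw [dynDelta, h0, iter_diag n h]
    simp only [Prod.norm_def, Prod.fst_sub, Prod.snd_sub, norm_sub_rev]
    simp only [sub_zero, Real.norm_eq_abs, max_self,
      abs_mul, abs_pow, abs_two]
    rw [zero_sub, abs_neg, abs_mul, abs_pow, abs_two]
    field_simp
  · rw [dynDelta, h0, iter_vert n h]
    simp only [Prod.norm_def, Prod.fst_sub, Prod.snd_sub, norm_sub_rev]
    simp only [sub_zero, sub_self, Real.norm_eq_abs,
      abs_zero, abs_div, abs_pow, abs_two]
    rw [max_eq_right (by positivity), max_eq_right (abs_nonneg h)]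
    rw [zero_sub, abs_neg, abs_div, abs_pow, abs_two]
    field_simp
  · rw [dynDelta, h0, iter_hor n h]
    simp only [Prod.norm_def, Prod.fst_sub, Prod.snd_sub, norm_sub_rev]
    simp only [sub_zero, sub_self, Real.norm_eq_abs,
      abs_zero, abs_mul, abs_pow]
    rw [max_eq_left (by positivity), max_eq_left (abs_nonneg h)]
    rw [zero_sub, abs_neg, abs_mul, abs_pow]
    norm_num
    field_simp

end
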